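/- Let M be a connected loopless matroid of rank k ≥ 1 on a finite set S with rank function r. Then the base polytope of M is cut out by the nonnegativity constraints, the rank equation, and the rank inequalities indexed by non-degenerate flats: BP_M = {x ∈ ℝ^S : x(i) ≥ 0 for all i ∈ S, x(S) = k, and x(F) ≤ r(F) for every non-degenerate flat F of M}. -/

import Mathlib

open Finset

/-- A (finite) matroid on a finite ground set `E`, given by a submodular rank function,
following the matroid rank axioms (R1)-(R3). -/
structure FinMatroid (α : Type*) [DecidableEq α] where
  E : Finset α
  r : Finset α → ℕ
  r_le_card : ∀ ⦃A : Finset α⦄, A ⊆ E → r A ≤ A.card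
  r_mono : ∀ ⦃A B : Finset α⦄, A ⊆ B → B ⊆ E → r A ≤ r B
  r_submod : ∀ ⦃A B : Finset α⦄, A ⊆ E → B ⊆ E → r (A ∪ B) + r (A ∩ B) ≤ r A + r B

namespace FinMatroid

variable {α : Type*} [DecidableEq α]

/-- A set is independent if it is a subset of the ground set whose rank is its cardinality. -/
def Indep (M : FinMatroid α) (A : Finset α) : Prop :=
  A ⊆ M.E ∧ M.r A = A.card

/-- A base is a maximal independent set. -/
def Base (M : FinMatroid α) (B : Finset α) : Prop :=
  M.Indep B ∧ ∀ ⦃A : Finset α⦄, M.Indep A → B ⊆ A → A = B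

/-- A basis of `A` is a maximal independent subset of `A`. -/
def BasisOf (M : FinMatroid α) (I A : Finset α) : Prop :=
  I ⊆ A ∧ M.Indep I ∧ ∀ ⦃J : Finset α⦄, J ⊆ A → M.Indep J → I ⊆ J → J = I

/-- A flat is a set `F` with `F = {s ∈ E : r (F ∪ {s}) = r F}`. -/
def Flat (M : FinMatroid α) (F : Finset α) : Prop :=
  F = M.E.filter (fun s => M.r (F ∪ {s}) = M.r F)

/-- A matroid is loopless if every singleton of the ground set has rank one. -/
def Loopless (M : FinMatroid α) : Prop :=
  ∀ s ∈ M.E, M.r {s} = 1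

/-- The restriction `M|A` of `M` to `A`. -/
def restrict (M : FinMatroid α) (A : Finset α) : FinMatroid α where
  E := A ∩ M.E
  r := M.r
  r_le_card := fun _ h => M.r_le_card (h.trans inter_subset_right)
  r_mono := fun _ _ h h' => M.r_mono h (h'.trans inter_subset_right)
  r_submod := fun _ _ h h' =>
    M.r_submod (h.trans inter_subset_right) (h'.trans inter_subset_right)

/-- The contraction `M/C` of `C` in `M`, with rank function `A ↦ r (A ∪ C) - r C`. -/
def contract (M : FinMatroid α) (C : Finset α) : FinMatroid α where
  E := M.E \ C
  r := fun A => M.r (A ∪ C ∩ M.E) - M.r (C ∩ M.E)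
  r_le_card := by
    intro A hA
    have hAE : A ⊆ M.E := hA.trans sdiff_subset
    have hc : C ∩ M.E ⊆ M.E := inter_subset_right
    have h1 := M.r_submod hAE hc
    have h2 := M.r_le_card hAE
    beta_reduce
    omega
  r_mono := by
    intro A B hAB hB
    have hBE : B ⊆ M.E := hB.trans sdiff_subset
    have hc : C ∩ M.E ⊆ M.E := inter_subset_right
    have h1 : M.r (A ∪ C ∩ M.E) ≤ M.r (B ∪ C ∩ M.E) :=
      M.r_mono (union_subset_union hAB (Finset.Subset.refl _)) (union_subset hBE hc)
    beta_reduce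
    omega
  r_submod := by
    intro A B hA hB
    have hAE : A ⊆ M.E := hA.trans sdiff_subset
    have hBE : B ⊆ M.E := hB.trans sdiff_subset
    have hc : C ∩ M.E ⊆ M.E := inter_subset_right
    have hAc : A ∪ C ∩ M.E ⊆ M.E := union_subset hAE hc
    have hBc : B ∪ C ∩ M.E ⊆ M.E := union_subset hBE hc
    have h1 := M.r_submod hAc hBc
    have e1 : (A ∪ C ∩ M.E) ∪ (B ∪ C ∩ M.E) = (A ∪ B) ∪ C ∩ M.E := by
      ext x; simp only [Finset.mem_union, Finset.mem_inter]; tauto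
    have e2 : (A ∪ C ∩ M.E) ∩ (B ∪ C ∩ M.E) = (A ∩ B) ∪ C ∩ M.E := by
      ext x; simp only [Finset.mem_union, Finset.mem_inter]; tauto
    rw [e1, e2] at h1
    have hABc : (A ∩ B) ∪ C ∩ M.E ⊆ M.E := union_subset (inter_subset_left.trans hAE) hc
    have hABc' : (A ∪ B) ∪ C ∩ M.E ⊆ M.E := union_subset (union_subset hAE hBE) hc
    have h2 : M.r (C ∩ M.E) ≤ M.r ((A ∩ B) ∪ C ∩ M.E) := M.r_mono subset_union_right hABc
    have h3 : M.r (C ∩ M.E) ≤ M.r (A ∪ C ∩ M.E) := M.r_mono subset_union_right hAc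
    have h4 : M.r (C ∩ M.E) ≤ M.r (B ∪ C ∩ M.E) := M.r_mono subset_union_right hBc
    have h5 : M.r (C ∩ M.E) ≤ M.r ((A ∪ B) ∪ C ∩ M.E) := M.r_mono subset_union_right hABc'
    beta_reduce
    omega

/-- `A` is a separator of `M` if `r A + r (E \ A) = r E`. -/
def Separator (M : FinMatroid α) (A : Finset α) : Prop :=
  A ⊆ M.E ∧ M.r A + M.r (M.E \ A) = M.r M.E

/-- `M` is connected (inseparable) if its ground set is nonempty and its only
separators are `∅` and `E`. -/
def Connected (M : FinMatroid α) : Prop :=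
  M.E.Nonempty ∧ ∀ A : Finset α, M.Separator A → A = ∅ ∨ A = M.E

/-- For connected `M`, a set `∅ ≠ F ⊊ E` is non-degenerate if both `M|F` and `M/F`
are connected. -/
def Nondegenerate (M : FinMatroid α) (F : Finset α) : Prop :=
  F ≠ ∅ ∧ F ⊂ M.E ∧ (M.restrict F).Connected ∧ (M.contract F).Connected

end FinMatroid

noncomputable section

open FinMatroid

/-- The indicator (incidence) vector `1^A ∈ ℝ^α` of a finite set `A`. -/
def indicatorVec {α : Type*} [DecidableEq α] (A : Finset α) : α → ℝ :=
  fun i => if i ∈ A then 1 else 0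

/-- The base polytope of a matroid: the convex hull of the indicator vectors of its bases. -/
def basePolytope {α : Type*} [DecidableEq α] (M : FinMatroid α) : Set (α → ℝ) :=
  convexHull ℝ {x | ∃ B : Finset α, M.Base B ∧ x = indicatorVec B}

/-- `Q` is a face of `P`: either `∅`, or `P` itself, or the subset of `P` where some
linear functional attains its maximum over `P` (an exposed face). -/
def IsFaceOf {α : Type*} (P Q : Set (α → ℝ)) : Prop :=
  Q = ∅ ∨ Q = P ∨ ∃ ℓ : (α → ℝ) →ₗ[ℝ] ℝ, Q = {x ∈ P | ∀ y ∈ P, ℓ y ≤ ℓ x}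

/-- The dimension of a convex set: the dimension of the direction of its affine span. -/
def sdim {α : Type*} (Q : Set (α → ℝ)) : ℕ :=
  Module.finrank ℝ (affineSpan ℝ Q).direction

end


namespace FinMatroid

variable {α : Type*} [DecidableEq α] {M : FinMatroid α}

lemma r_empty (M : FinMatroid α) : M.r ∅ = 0 :=
  Nat.le_zero.mp ((M.r_le_card (Finset.empty_subset _)).trans (by simp))

lemma r_union_le {A B : Finset α} (hA : A ⊆ M.E) (hB : B ⊆ M.E) :
    M.r (A ∪ B) ≤ M.r A + M.r B := by
  have := M.r_submod hA hB
  omega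

lemma r_le_r_union_left {A B : Finset α} (hAB : A ∪ B ⊆ M.E) :
    M.r A ≤ M.r (A ∪ B) := M.r_mono subset_union_left hAB

lemma r_singleton_le (M : FinMatroid α) {s : α} (hs : s ∈ M.E) : M.r {s} ≤ 1 := by
  simpa using M.r_le_card (Finset.singleton_subset_iff.mpr hs)

lemma r_union_singleton_le {A : Finset α} {s : α} (hA : A ⊆ M.E) (hs : s ∈ M.E) :
    M.r (A ∪ {s}) ≤ M.r A + 1 :=
  (r_union_le hA (Finset.singleton_subset_iff.mpr hs)).trans
    (by have := M.r_singleton_le hs; omega)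

/-- If every element of `B` preserves the rank of `A`, so does all of `B`. -/
lemma span_lemma {A B : Finset α} (hA : A ⊆ M.E) (hB : B ⊆ M.E)
    (h : ∀ s ∈ B, M.r (A ∪ {s}) = M.r A) : M.r (A ∪ B) = M.r A := by
  classical
  induction B using Finset.induction_on with
  | empty => simp
  | @insert s B hsB ih =>
    have hsE : s ∈ M.E := hB (Finset.mem_insert_self s B)
    have hBE : B ⊆ M.E := (Finset.subset_insert s B).trans hB
    have hIH : M.r (A ∪ B) = M.r A := ih hBE (fun t ht => h t (Finset.mem_insert_of_mem ht))
    have hs : M.r (A ∪ {s}) = M.r A := h s (Finset.mem_insert_self s B)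
    have hsub := M.r_submod (Finset.union_subset hA hBE)
      (Finset.union_subset hA (Finset.singleton_subset_iff.mpr hsE))
    have h1 : (A ∪ B) ∪ (A ∪ {s}) = A ∪ insert s B := by
      ext t; simp [Finset.mem_insert]; tauto
    have h2 : A ⊆ (A ∪ B) ∩ (A ∪ {s}) := by
      intro t ht; simp [Finset.mem_inter, ht]
    have h3 : (A ∪ B) ∩ (A ∪ {s}) ⊆ M.E := by
      intro t ht
      exact (Finset.union_subset hA hBE) (Finset.mem_inter.mp ht).1
    have h4 := M.r_mono h2 h3
    rw [h1] at hsub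
    have h5 : M.r A ≤ M.r (A ∪ insert s B) :=
      r_le_r_union_left (Finset.union_subset hA (Finset.insert_subset hsE hBE))
    omega

lemma r_union_le_add_card {A B : Finset α} (hA : A ⊆ M.E) (hB : B ⊆ M.E) :
    M.r (A ∪ B) ≤ M.r A + B.card := by
  have := r_union_le hA hB
  have := M.r_le_card hB
  omega

lemma indep_subset {A B : Finset α} (hB : M.Indep B) (hAB : A ⊆ B) : M.Indep A := by
  obtain ⟨hBE, hBr⟩ := hB
  have hAE : A ⊆ M.E := hAB.trans hBE
  refine ⟨hAE, le_antisymm (M.r_le_card hAE) ?_⟩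
  have h1 : A ∪ (B \ A) = B := Finset.union_sdiff_of_subset hAB
  have h2 : M.r B ≤ M.r A + (B \ A).card := by
    have := r_union_le_add_card (M := M) (B := B \ A) hAE ((Finset.sdiff_subset).trans hBE)
    rwa [h1] at this
  have h3 : (B \ A).card = B.card - A.card := Finset.card_sdiff_of_subset hAB
  have h4 : A.card ≤ B.card := Finset.card_le_card hAB
  omega

lemma base_spanning {B : Finset α} (hB : M.Base B) : M.r M.E = B.card := by
  obtain ⟨⟨hBE, hBr⟩, hmax⟩ := hB
  by_contra hne
  have hlt : M.r B < M.r M.E := by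
    have := M.r_mono hBE (le_refl M.E)
    omega
  -- there is s ∈ E with r (B ∪ {s}) > r B
  have hex : ∃ s ∈ M.E, M.r (B ∪ {s}) ≠ M.r B := by
    by_contra hall
    push_neg at hall
    have := span_lemma hBE (le_refl M.E) hall
    rw [Finset.union_eq_right.mpr hBE] at this
    omega
  obtain ⟨s, hsE, hsne⟩ := hex
  have hsB : s ∉ B := by
    intro hs
    apply hsne
    rw [Finset.union_eq_left.mpr (Finset.singleton_subset_iff.mpr hs)]
  have hle : M.r (B ∪ {s}) ≤ M.r B + 1 := r_union_singleton_le hBE hsE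
  have hge : M.r B ≤ M.r (B ∪ {s}) :=
    r_le_r_union_left (Finset.union_subset hBE (Finset.singleton_subset_iff.mpr hsE))
  have hr' : M.r (B ∪ {s}) = B.card + 1 := by omega
  have hcard : (B ∪ {s}).card = B.card + 1 := by
    have : B ∪ {s} = insert s B := by ext t; simp [Finset.mem_insert]
    rw [this, Finset.card_insert_of_notMem hsB]
  have hindep : M.Indep (B ∪ {s}) :=
    ⟨Finset.union_subset hBE (Finset.singleton_subset_iff.mpr hsE), by omega⟩
  have := hmax hindep subset_union_left
  have : s ∈ B := by
    rw [← this]; simp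
  exact hsB this


lemma Flat.subset_ground {F : Finset α} (hF : M.Flat F) : F ⊆ M.E := by
  conv_lhs => rw [hF]
  exact Finset.filter_subset _ _

lemma Flat.mem_of_rank_eq {F : Finset α} (hF : M.Flat F) {s : α} (hs : s ∈ M.E)
    (h : M.r (F ∪ {s}) = M.r F) : s ∈ F := by
  have : s ∈ M.E.filter (fun t => M.r (F ∪ {t}) = M.r F) := Finset.mem_filter.mpr ⟨hs, h⟩
  rwa [← hF] at this

lemma Flat.insert_rank {F : Finset α} (hF : M.Flat F) {s : α} (hs : s ∈ M.E) (hsF : s ∉ F) :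
    M.r (F ∪ {s}) = M.r F + 1 := by
  have hFE := hF.subset_ground
  have hne : M.r (F ∪ {s}) ≠ M.r F := fun h => hsF (hF.mem_of_rank_eq hs h)
  have h1 := r_union_singleton_le (M := M) hFE hs
  have h2 : M.r F ≤ M.r (F ∪ {s}) :=
    r_le_r_union_left (Finset.union_subset hFE (Finset.singleton_subset_iff.mpr hs))
  omega

lemma flat_of {F : Finset α} (hFE : F ⊆ M.E)
    (h : ∀ s ∈ M.E, M.r (F ∪ {s}) = M.r F → s ∈ F) : M.Flat F := by
  unfold Flat
  ext s
  simp only [Finset.mem_filter]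
  constructor
  · intro hs
    refine ⟨hFE hs, ?_⟩
    rw [Finset.union_eq_left.mpr (Finset.singleton_subset_iff.mpr hs)]
  · rintro ⟨hsE, heq⟩
    exact h s hsE heq

/-- The closure of a set. -/
def cl (M : FinMatroid α) (A : Finset α) : Finset α :=
  M.E.filter (fun s => M.r (A ∪ {s}) = M.r A)

lemma subset_cl {A : Finset α} (hA : A ⊆ M.E) : A ⊆ M.cl A := by
  intro s hs
  refine Finset.mem_filter.mpr ⟨hA hs, ?_⟩
  rw [Finset.union_eq_left.mpr (Finset.singleton_subset_iff.mpr hs)]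

lemma cl_subset_ground (M : FinMatroid α) (A : Finset α) : M.cl A ⊆ M.E :=
  Finset.filter_subset _ _

lemma r_cl {A : Finset α} (hA : A ⊆ M.E) : M.r (M.cl A) = M.r A := by
  have h1 : A ∪ M.cl A = M.cl A := Finset.union_eq_right.mpr (subset_cl hA)
  have h2 : M.r (A ∪ M.cl A) = M.r A :=
    span_lemma hA (M.cl_subset_ground A) (fun s hs => (Finset.mem_filter.mp hs).2)
  rw [← h1, h2]

lemma cl_flat {A : Finset α} (hA : A ⊆ M.E) : M.Flat (M.cl A) := by
  refine flat_of (M.cl_subset_ground A) ?_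
  intro s hsE heq
  refine Finset.mem_filter.mpr ⟨hsE, ?_⟩
  have h1 : M.r (A ∪ {s}) ≤ M.r (M.cl A ∪ {s}) :=
    M.r_mono (Finset.union_subset_union_left (subset_cl hA))
      (Finset.union_subset (M.cl_subset_ground A) (Finset.singleton_subset_iff.mpr hsE))
  have h2 : M.r A ≤ M.r (A ∪ {s}) :=
    r_le_r_union_left (Finset.union_subset hA (Finset.singleton_subset_iff.mpr hsE))
  rw [heq, r_cl hA] at h1
  omega

/-- A separator of the restriction to a flat is a flat (for loopless matroids). -/
lemma flat_of_restrict_separator (hloop : M.Loopless) {F F1 : Finset α}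
    (hF : M.Flat F) (hF1 : F1 ⊆ F) (hsep : M.r F1 + M.r (F \ F1) = M.r F) :
    M.Flat F1 := by
  have hFE := hF.subset_ground
  have hF1E : F1 ⊆ M.E := hF1.trans hFE
  refine flat_of hF1E ?_
  intro s hsE heq
  by_contra hsF1
  by_cases hsF : s ∈ F
  · -- s ∈ F \ F1 : submodularity forces rank increase
    have hU : (F1 ∪ {s}) ∪ (F \ F1) = F := by
      ext t
      simp only [Finset.mem_union, Finset.mem_sdiff, Finset.mem_singleton]
      constructor
      · rintro ((h | rfl) | ⟨h, _⟩) <;> first | exact hF1 h | exact hsF | exact h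
      · intro ht
        by_cases h : t ∈ F1
        · exact Or.inl (Or.inl h)
        · exact Or.inr ⟨ht, h⟩
    have hI : (F1 ∪ {s}) ∩ (F \ F1) = {s} := by
      ext t
      simp only [Finset.mem_inter, Finset.mem_union, Finset.mem_sdiff, Finset.mem_singleton]
      constructor
      · rintro ⟨h | rfl, hF2⟩
        · exact absurd h hF2.2
        · rfl
      · rintro rfl
        exact ⟨Or.inr rfl, hsF, hsF1⟩
    have hsub := M.r_submod (A := F1 ∪ {s}) (B := (F \ F1))
      (Finset.union_subset hF1E (Finset.singleton_subset_iff.mpr hsE))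
      ((Finset.sdiff_subset).trans hFE)
    rw [hU, hI, hloop s hsE, heq] at hsub
    omega
  · -- s ∉ F : then F ∪ {s} would have rank r F, contradicting flatness
    have hU : (F1 ∪ {s}) ∪ (F \ F1) = F ∪ {s} := by
      ext t
      simp only [Finset.mem_union, Finset.mem_sdiff, Finset.mem_singleton]
      constructor
      · rintro ((h | rfl) | ⟨h, _⟩)
        · exact Or.inl (hF1 h)
        · exact Or.inr rfl
        · exact Or.inl h
      · rintro (ht | rfl)
        · by_cases h : t ∈ F1
          · exact Or.inl (Or.inl h)
          · exact Or.inr ⟨ht, h⟩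
        · exact Or.inl (Or.inr rfl)
    have hle : M.r (F ∪ {s}) ≤ M.r (F1 ∪ {s}) + M.r (F \ F1) := by
      rw [← hU]
      exact r_union_le (Finset.union_subset hF1E (Finset.singleton_subset_iff.mpr hsE))
        ((Finset.sdiff_subset).trans hFE)
    rw [heq] at hle
    rw [hF.insert_rank hsE hsF] at hle
    omega

/-- Adjoining one side of a separation of `M/F` to the flat `F` yields a flat. -/
lemma flat_union_separator_contract {F X : Finset α} (hF : M.Flat F)
    (hX : X ⊆ M.E \ F)
    (hsep : M.r (F ∪ X) + M.r (F ∪ ((M.E \ F) \ X)) = M.r M.E + M.r F) :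
    M.Flat (F ∪ X) := by
  have hFE := hF.subset_ground
  have hXE : X ⊆ M.E := hX.trans Finset.sdiff_subset
  refine flat_of (Finset.union_subset hFE hXE) ?_
  intro s hsE heq
  by_contra hs
  simp only [Finset.mem_union, not_or] at hs
  obtain ⟨hsF, hsX⟩ := hs
  have hsY : s ∈ (M.E \ F) \ X := by
    simp only [Finset.mem_sdiff]
    exact ⟨⟨hsE, hsF⟩, hsX⟩
  set Y := (M.E \ F) \ X with hY
  have hYE : Y ⊆ M.E := (Finset.sdiff_subset).trans Finset.sdiff_subset
  have hU : ((F ∪ X) ∪ {s}) ∪ (F ∪ Y) = M.E := by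
    apply Finset.Subset.antisymm
    · refine Finset.union_subset (Finset.union_subset (Finset.union_subset hFE hXE)
        (Finset.singleton_subset_iff.mpr hsE)) (Finset.union_subset hFE hYE)
    · intro t ht
      simp only [Finset.mem_union, Finset.mem_singleton, hY, Finset.mem_sdiff]
      by_cases h1 : t ∈ F
      · tauto
      · by_cases h2 : t ∈ X
        · tauto
        · tauto
  have hI : ((F ∪ X) ∪ {s}) ∩ (F ∪ Y) = F ∪ {s} := by
    ext t
    simp only [Finset.mem_inter, Finset.mem_union, Finset.mem_singleton, hY, Finset.mem_sdiff]
    constructor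
    · rintro ⟨(h | h) | rfl, h2⟩
      · exact Or.inl h
      · rcases h2 with h2 | h2
        · exact Or.inl h2
        · exact absurd h h2.2
      · exact Or.inr rfl
    · rintro (ht | rfl)
      · exact ⟨Or.inl (Or.inl ht), Or.inl ht⟩
      · exact ⟨Or.inr rfl, Or.inr ⟨⟨hsE, hsF⟩, hsX⟩⟩
  have hsub := M.r_submod (A := (F ∪ X) ∪ {s}) (B := F ∪ Y)
    (Finset.union_subset (Finset.union_subset hFE hXE) (Finset.singleton_subset_iff.mpr hsE))
    (Finset.union_subset hFE hYE)
  rw [hU, hI, heq] at hsub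
  have hflat := hF.insert_rank hsE hsF
  omega

/-- Modularity across a separator. -/
lemma sep_modular (N : FinMatroid α) {X A B : Finset α} (hXE : X ⊆ N.E)
    (hsep : N.r X + N.r (N.E \ X) = N.r N.E)
    (hA : A ⊆ X) (hB : B ⊆ N.E \ X) : N.r (A ∪ B) = N.r A + N.r B := by
  have hBE : B ⊆ N.E := hB.trans Finset.sdiff_subset
  have hAE : A ⊆ N.E := hA.trans hXE
  -- step 1 : r (X ∪ B) = r X + r B
  have hU1 : (X ∪ B) ∪ (N.E \ X) = N.E := by
    apply Finset.Subset.antisymm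
    · exact Finset.union_subset (Finset.union_subset hXE hBE) Finset.sdiff_subset
    · intro t ht
      simp only [Finset.mem_union, Finset.mem_sdiff]
      by_cases h : t ∈ X <;> tauto
  have hI1 : (X ∪ B) ∩ (N.E \ X) = B := by
    ext t
    simp only [Finset.mem_inter, Finset.mem_union, Finset.mem_sdiff]
    constructor
    · rintro ⟨h | h, h2⟩
      · exact absurd h h2.2
      · exact h
    · intro ht
      exact ⟨Or.inr ht, Finset.mem_sdiff.mp (hB ht)⟩
  have hsub1 := N.r_submod (A := X ∪ B) (B := (N.E \ X))
    (Finset.union_subset hXE hBE) Finset.sdiff_subset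
  rw [hU1, hI1] at hsub1
  have hle1 : N.r (X ∪ B) ≤ N.r X + N.r B := r_union_le hXE hBE
  have heq1 : N.r (X ∪ B) = N.r X + N.r B := by omega
  -- step 2 : submodularity on (A ∪ B, X)
  have hU2 : (A ∪ B) ∪ X = X ∪ B := by
    ext t
    simp only [Finset.mem_union]
    constructor
    · rintro ((h | h) | h)
      · exact Or.inl (hA h)
      · exact Or.inr h
      · exact Or.inl h
    · rintro (h | h) <;> tauto
  have hI2 : (A ∪ B) ∩ X = A := by
    ext t
    simp only [Finset.mem_inter, Finset.mem_union]
    constructor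
    · rintro ⟨h | h, h2⟩
      · exact h
      · exact absurd h2 (Finset.mem_sdiff.mp (hB h)).2
    · intro ht
      exact ⟨Or.inl ht, hA ht⟩
  have hsub2 := N.r_submod (A := A ∪ B) (B := X) (Finset.union_subset hAE hBE) hXE
  rw [hU2, hI2, heq1] at hsub2
  have hle2 : N.r (A ∪ B) ≤ N.r A + N.r B := r_union_le hAE hBE
  omega

lemma contract_r_eq {F A : Finset α} (hFE : F ⊆ M.E) :
    (M.contract F).r A = M.r (A ∪ F) - M.r F := by
  show M.r (A ∪ F ∩ M.E) - M.r (F ∩ M.E) = _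
  rw [Finset.inter_eq_left.mpr hFE]

lemma contract_separator_iff {F X : Finset α} (hFE : F ⊆ M.E) :
    (M.contract F).Separator X ↔ X ⊆ M.E \ F ∧
      M.r (X ∪ F) + M.r (((M.E \ F) \ X) ∪ F) = M.r M.E + M.r F := by
  have hE' : (M.contract F).E = M.E \ F := by
    show M.E \ F = _ ; rfl
  have key : ∀ A : Finset α, A ⊆ M.E \ F → ((M.contract F).r A = M.r (A ∪ F) - M.r F ∧
      M.r F ≤ M.r (A ∪ F) ∧ M.r (A ∪ F) ≤ M.r M.E) := by
    intro A hA
    have hAE : A ⊆ M.E := hA.trans Finset.sdiff_subset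
    refine ⟨contract_r_eq hFE, ?_, ?_⟩
    · exact M.r_mono Finset.subset_union_right (Finset.union_subset hAE hFE)
    · exact M.r_mono (Finset.union_subset hAE hFE) (le_refl _)
  have hEF : (M.E \ F) ∪ F = M.E := by
    ext t
    simp only [Finset.mem_union, Finset.mem_sdiff]
    constructor
    · rintro (⟨h, _⟩ | h)
      · exact h
      · exact hFE h
    · intro ht
      by_cases h : t ∈ F <;> tauto
  constructor
  · rintro ⟨hX, heq⟩
    rw [hE'] at hX
    refine ⟨hX, ?_⟩
    obtain ⟨e1, b1, b2⟩ := key X hX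
    obtain ⟨e2, b3, b4⟩ := key ((M.E \ F) \ X) (Finset.sdiff_subset)
    have e3 : (M.contract F).r ((M.contract F).E \ X) = M.r (((M.E \ F) \ X) ∪ F) - M.r F := by
      rw [hE']; exact e2
    have e4 : (M.contract F).r (M.contract F).E = M.r M.E - M.r F := by
      rw [hE', contract_r_eq hFE, hEF]
    rw [e1, e3, e4] at heq
    omega
  · rintro ⟨hX, heq⟩
    refine ⟨by rw [hE']; exact hX, ?_⟩
    obtain ⟨e1, b1, b2⟩ := key X hX
    obtain ⟨e2, b3, b4⟩ := key ((M.E \ F) \ X) (Finset.sdiff_subset)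
    have e3 : (M.contract F).r ((M.contract F).E \ X) = M.r (((M.E \ F) \ X) ∪ F) - M.r F := by
      rw [hE']; exact e2
    have e4 : (M.contract F).r (M.contract F).E = M.r M.E - M.r F := by
      rw [hE', contract_r_eq hFE, hEF]
    rw [e1, e3, e4]
    omega


/-- **Key lemma.** If `F` is a flat with connected contraction and `F1` is a separator of
`M|F`, then `M/F1` is connected. -/
lemma contract_sep_connected (hconn : M.Connected) {F F1 : Finset α}
    (hF : M.Flat F) (hcF : (M.contract F).Connected)
    (hF1 : F1 ⊆ F) (hsep : M.r F1 + M.r (F \ F1) = M.r F) :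
    (M.contract F1).Connected := by
  classical
  have hFE := hF.subset_ground
  have hF1E : F1 ⊆ M.E := hF1.trans hFE
  obtain ⟨t0, ht0⟩ := hcF.1
  have ht0' : t0 ∈ M.E \ F := ht0
  have ht0E : t0 ∈ M.E := (Finset.mem_sdiff.mp ht0').1
  have ht0F : t0 ∉ F := (Finset.mem_sdiff.mp ht0').2
  -- the rank-additivity over the separator of the restriction
  have r2 : ∀ A : Finset α, A ⊆ F \ F1 → M.r (A ∪ F1) = M.r F1 + M.r A := by
    intro A hA
    have hAE : A ⊆ M.E := hA.trans ((Finset.sdiff_subset).trans hFE)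
    have hle : M.r (A ∪ F1) ≤ M.r F1 + M.r A := by
      rw [Finset.union_comm]; exact r_union_le hF1E hAE
    have hU : (A ∪ F1) ∪ (F \ F1) = F := by
      ext t
      simp only [Finset.mem_union, Finset.mem_sdiff]
      constructor
      · rintro ((h | h) | ⟨h, _⟩)
        · exact (Finset.mem_sdiff.mp (hA h)).1
        · exact hF1 h
        · exact h
      · intro ht
        by_cases h : t ∈ F1
        · tauto
        · tauto
    have hI : (A ∪ F1) ∩ (F \ F1) = A := by
      ext t
      simp only [Finset.mem_inter, Finset.mem_union, Finset.mem_sdiff]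
      constructor
      · rintro ⟨h | h, h2⟩
        · exact h
        · exact absurd h h2.2
      · intro ht
        exact ⟨Or.inl ht, Finset.mem_sdiff.mp (hA ht)⟩
    have hsub := M.r_submod (A := A ∪ F1) (B := (F \ F1))
      (Finset.union_subset hAE hF1E) ((Finset.sdiff_subset).trans hFE)
    rw [hU, hI] at hsub
    omega
  constructor
  · exact ⟨t0, Finset.mem_sdiff.mpr ⟨ht0E, fun h => ht0F (hF1 h)⟩⟩
  intro X hXsep
  obtain ⟨hXN, heqN⟩ := hXsep
  have hX : X ⊆ M.E \ F1 := hXN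
  have hadd : M.r (X ∪ F1) + M.r (((M.E \ F1) \ X) ∪ F1) = M.r M.E + M.r F1 :=
    ((contract_separator_iff hF1E).mp ⟨hXN, heqN⟩).2
  set Xc : Finset α := (M.E \ F1) \ X with hXcdef
  set X1 : Finset α := X \ F with hX1def
  set X2 : Finset α := X ∩ F with hX2def
  set Xc1 : Finset α := Xc \ F with hXc1def
  set Xc2 : Finset α := Xc ∩ F with hXc2def
  have hXmem : ∀ t, t ∈ X → t ∈ M.E ∧ t ∉ F1 := fun t ht => Finset.mem_sdiff.mp (hX ht)
  have hXcmem : ∀ t, t ∈ Xc ↔ (t ∈ M.E ∧ t ∉ F1) ∧ t ∉ X := by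
    intro t; simp only [hXcdef, Finset.mem_sdiff]
  have hXE : X ⊆ M.E := fun t ht => (hXmem t ht).1
  have hXcE : Xc ⊆ M.E := fun t ht => ((hXcmem t).mp ht).1.1
  have hX2sub : X2 ⊆ F \ F1 := by
    intro t ht
    obtain ⟨h1, h2⟩ := Finset.mem_inter.mp ht
    exact Finset.mem_sdiff.mpr ⟨h2, (hXmem t h1).2⟩
  have hXc2sub : Xc2 ⊆ F \ F1 := by
    intro t ht
    obtain ⟨h1, h2⟩ := Finset.mem_inter.mp ht
    exact Finset.mem_sdiff.mpr ⟨h2, ((hXcmem t).mp h1).1.2⟩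
  -- rank of X2 ∪ Xc2 via the separator X of M/F1
  have hBsub : Xc2 ⊆ (M.contract F1).E \ X := by
    intro t ht
    obtain ⟨h1, h2⟩ := Finset.mem_inter.mp ht
    obtain ⟨⟨hE', hf1⟩, hx⟩ := (hXcmem t).mp h1
    exact Finset.mem_sdiff.mpr ⟨Finset.mem_sdiff.mpr ⟨hE', hf1⟩, hx⟩
  have hmod := sep_modular (M.contract F1) (X := X) (A := X2) (B := Xc2)
    hXN heqN Finset.inter_subset_left hBsub
  have hid1 : X2 ∪ Xc2 = F \ F1 := by
    apply Finset.Subset.antisymm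
    · exact Finset.union_subset hX2sub hXc2sub
    · intro t ht
      obtain ⟨htF, htF1⟩ := Finset.mem_sdiff.mp ht
      have htE := hFE htF
      by_cases h : t ∈ X
      · exact Finset.mem_union_left _ (Finset.mem_inter.mpr ⟨h, htF⟩)
      · have : t ∈ Xc := (hXcmem t).mpr ⟨⟨htE, htF1⟩, h⟩
        exact Finset.mem_union_right _ (Finset.mem_inter.mpr ⟨this, htF⟩)
  have hXX : M.r F1 + (M.r X2 + M.r Xc2) = M.r F := by
    rw [contract_r_eq hF1E, contract_r_eq hF1E, contract_r_eq hF1E, hid1] at hmod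
    have e1 : (F \ F1) ∪ F1 = F := by
      ext t
      simp only [Finset.mem_union, Finset.mem_sdiff]
      constructor
      · rintro (⟨h, _⟩ | h)
        · exact h
        · exact hF1 h
      · intro h; by_cases h1 : t ∈ F1 <;> tauto
    rw [e1, r2 X2 hX2sub, r2 Xc2 hXc2sub] at hmod
    have b1 : M.r F1 ≤ M.r F := M.r_mono hF1 hFE
    omega
  -- F ∪ X1 = (X ∪ F1) ∪ Xc2 and F ∪ Xc1 = (Xc ∪ F1) ∪ X2
  have hid2 : F ∪ X1 = (X ∪ F1) ∪ Xc2 := by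
    ext t
    simp only [Finset.mem_union, Finset.mem_sdiff, Finset.mem_inter, hX1def, hXc2def]
    constructor
    · intro h
      rcases h with h | ⟨h1, h2⟩
      · by_cases hf1 : t ∈ F1
        · tauto
        · by_cases hx : t ∈ X
          · tauto
          · have : t ∈ Xc := (hXcmem t).mpr ⟨⟨hFE h, hf1⟩, hx⟩
            tauto
      · tauto
    · rintro ((h | h) | ⟨h1, h2⟩)
      · by_cases hf : t ∈ F <;> tauto
      · exact Or.inl (hF1 h)
      · exact Or.inl h2
  have hid3 : F ∪ Xc1 = (Xc ∪ F1) ∪ X2 := by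
    ext t
    simp only [Finset.mem_union, Finset.mem_sdiff, Finset.mem_inter, hXc1def, hX2def]
    constructor
    · intro h
      rcases h with h | ⟨h1, h2⟩
      · by_cases hf1 : t ∈ F1
        · tauto
        · by_cases hx : t ∈ X
          · tauto
          · have : t ∈ Xc := (hXcmem t).mpr ⟨⟨hFE h, hf1⟩, hx⟩
            tauto
      · tauto
    · rintro ((h | h) | ⟨h1, h2⟩)
      · by_cases hf : t ∈ F <;> tauto
      · exact Or.inl (hF1 h)
      · exact Or.inl h2
  have hXc2E : Xc2 ⊆ M.E := fun t ht => hFE (Finset.mem_inter.mp ht).2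
  have hX2E : X2 ⊆ M.E := fun t ht => hFE (Finset.mem_inter.mp ht).2
  have h3a : M.r (F ∪ X1) ≤ M.r (X ∪ F1) + M.r Xc2 := by
    rw [hid2]
    exact r_union_le (Finset.union_subset hXE hF1E) hXc2E
  have h3b : M.r (F ∪ Xc1) ≤ M.r (Xc ∪ F1) + M.r X2 := by
    rw [hid3]
    exact r_union_le (Finset.union_subset hXcE hF1E) hX2E
  have hX1E : X1 ⊆ M.E := (Finset.sdiff_subset).trans hXE
  have hXc1E : Xc1 ⊆ M.E := (Finset.sdiff_subset).trans hXcE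
  have h4 : M.r M.E + M.r F ≤ M.r (F ∪ X1) + M.r (F ∪ Xc1) := by
    have hU : (F ∪ X1) ∪ (F ∪ Xc1) = M.E := by
      apply Finset.Subset.antisymm
      · exact Finset.union_subset (Finset.union_subset hFE hX1E)
          (Finset.union_subset hFE hXc1E)
      · intro t ht
        simp only [Finset.mem_union, Finset.mem_sdiff, hX1def, hXc1def]
        by_cases hf : t ∈ F
        · tauto
        · by_cases hf1 : t ∈ F1
          · exact absurd (hF1 hf1) hf
          · by_cases hx : t ∈ X
            · tauto
            · have : t ∈ Xc := (hXcmem t).mpr ⟨⟨ht, hf1⟩, hx⟩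
              tauto
    have hI : (F ∪ X1) ∩ (F ∪ Xc1) = F := by
      ext t
      simp only [Finset.mem_inter, Finset.mem_union, Finset.mem_sdiff, hX1def, hXc1def]
      constructor
      · rintro ⟨h1 | ⟨hx, hf⟩, h2 | h2⟩
        · exact h1
        · exact h1
        · exact absurd h2 hf
        · have htc : t ∈ Xc := h2.1
          exact absurd hx ((hXcmem t).mp htc).2
      · intro h; tauto
    have hsub := M.r_submod (A := F ∪ X1) (B := (F ∪ Xc1))
      (Finset.union_subset hFE hX1E) (Finset.union_subset hFE hXc1E)
    rw [hU, hI] at hsub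
    exact hsub
  have h5 : M.r (F ∪ X1) + M.r (F ∪ Xc1) = M.r M.E + M.r F := by omega
  -- X1 is a separator of M/F
  have hX1sub : X1 ⊆ M.E \ F := by
    intro t ht
    obtain ⟨h1, h2⟩ := Finset.mem_sdiff.mp ht
    exact Finset.mem_sdiff.mpr ⟨hXE h1, h2⟩
  have hid4 : (M.E \ F) \ X1 = Xc1 := by
    ext t
    simp only [Finset.mem_sdiff, hX1def, hXc1def]
    constructor
    · rintro ⟨⟨h1, h2⟩, h3⟩
      have hx : t ∉ X := fun hx => h3 ⟨hx, h2⟩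
      have hf1 : t ∉ F1 := fun h => h2 (hF1 h)
      exact ⟨(hXcmem t).mpr ⟨⟨h1, hf1⟩, hx⟩, h2⟩
    · rintro ⟨h1, h2⟩
      obtain ⟨⟨hE', hf1⟩, hx⟩ := (hXcmem t).mp h1
      exact ⟨⟨hE', h2⟩, fun h => hx h.1⟩
  have hX1sep : (M.contract F).Separator X1 := by
    rw [contract_separator_iff hFE]
    refine ⟨hX1sub, ?_⟩
    rw [hid4, Finset.union_comm X1 F, Finset.union_comm Xc1 F]
    exact h5
  rcases hcF.2 X1 hX1sep with hcase | hcase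
  · -- X1 = ∅ : X ⊆ F \ F1, and X is a separator of M, hence empty
    left
    have hXsubF : X ⊆ F \ F1 := by
      intro t ht
      by_cases hf : t ∈ F
      · exact Finset.mem_sdiff.mpr ⟨hf, (hXmem t ht).2⟩
      · exact absurd (show t ∈ X1 from Finset.mem_sdiff.mpr ⟨ht, hf⟩)
          (by rw [hcase]; exact Finset.notMem_empty t)
    have hEX : M.E \ X = Xc ∪ F1 := by
      ext t
      simp only [Finset.mem_sdiff, Finset.mem_union]
      constructor
      · rintro ⟨h1, h2⟩
        by_cases hf1 : t ∈ F1
        · tauto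
        · exact Or.inl ((hXcmem t).mpr ⟨⟨h1, hf1⟩, h2⟩)
      · rintro (h | h)
        · obtain ⟨⟨h1, _⟩, h2⟩ := (hXcmem t).mp h
          exact ⟨h1, h2⟩
        · refine ⟨hF1E h, fun hx => ?_⟩
          exact (hXmem t hx).2 h
    have hrX : M.r (X ∪ F1) = M.r F1 + M.r X := r2 X hXsubF
    have hMsep : M.Separator X := by
      refine ⟨hXE, ?_⟩
      rw [hEX]
      have b1 : M.r X ≤ M.r M.E := M.r_mono hXE (le_refl _)
      omega
    rcases hconn.2 X hMsep with h | h
    · exact h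
    · exfalso
      have : t0 ∈ X := by rw [h]; exact ht0E
      exact ht0F (Finset.mem_sdiff.mp (hXsubF this)).1
  · -- X1 = E \ F : Xc ⊆ F \ F1, Xc is a separator of M, hence empty, so X = E \ F1
    right
    have hXcsubF : Xc ⊆ F \ F1 := by
      intro t ht
      obtain ⟨⟨h1, h2⟩, h3⟩ := (hXcmem t).mp ht
      by_cases hf : t ∈ F
      · exact Finset.mem_sdiff.mpr ⟨hf, h2⟩
      · exfalso
        have : t ∈ X1 := by rw [hcase]; exact Finset.mem_sdiff.mpr ⟨h1, hf⟩
        exact h3 (Finset.mem_sdiff.mp this).1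
    have hEXc : M.E \ Xc = X ∪ F1 := by
      ext t
      simp only [Finset.mem_sdiff, Finset.mem_union]
      constructor
      · rintro ⟨h1, h2⟩
        by_cases hf1 : t ∈ F1
        · tauto
        · by_cases hx : t ∈ X
          · tauto
          · exact absurd ((hXcmem t).mpr ⟨⟨h1, hf1⟩, hx⟩) h2
      · rintro (h | h)
        · exact ⟨hXE h, fun hc => ((hXcmem t).mp hc).2 h⟩
        · exact ⟨hF1E h, fun hc => ((hXcmem t).mp hc).1.2 h⟩
    have hrXc : M.r (Xc ∪ F1) = M.r F1 + M.r Xc := r2 Xc hXcsubF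
    have hMsep : M.Separator Xc := by
      refine ⟨hXcE, ?_⟩
      rw [hEXc]
      have b1 : M.r Xc ≤ M.r M.E := M.r_mono hXcE (le_refl _)
      omega
    rcases hconn.2 Xc hMsep with h | h
    · -- Xc = ∅ hence X = E \ F1
      have : X = M.E \ F1 := by
        apply Finset.Subset.antisymm hX
        intro t ht
        obtain ⟨h1, h2⟩ := Finset.mem_sdiff.mp ht
        by_cases hx : t ∈ X
        · exact hx
        · exact absurd ((hXcmem t).mpr ⟨⟨h1, h2⟩, hx⟩) (by rw [h]; exact Finset.notMem_empty t)
      exact this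
    · exfalso
      have : t0 ∈ Xc := by rw [h]; exact ht0E
      exact ht0F (Finset.mem_sdiff.mp (hXcsubF this)).1


lemma restrict_E {F : Finset α} (hFE : F ⊆ M.E) : (M.restrict F).E = F := by
  show F ∩ M.E = F
  exact Finset.inter_eq_left.mpr hFE

section SumBounds

variable [Fintype α] {x : α → ℝ}

/-- Step C1: the flat inequality holds for flats with connected contraction. -/
lemma sum_le_of_contract_connected (hconn : M.Connected) (hloop : M.Loopless)
    (hx1 : ∀ F : Finset α, M.Flat F → M.Nondegenerate F → ∑ i ∈ F, x i ≤ (M.r F : ℝ)) :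
    ∀ n (F : Finset α), F.card ≤ n → M.Flat F → F ≠ M.E → (M.contract F).Connected →
      ∑ i ∈ F, x i ≤ (M.r F : ℝ) := by
  intro n
  induction n with
  | zero =>
    intro F hcard hF hFne hcF
    have : F = ∅ := Finset.card_eq_zero.mp (Nat.le_zero.mp hcard)
    subst this
    simp
  | succ n ih =>
    intro F hcard hF hFne hcF
    by_cases hF0 : F = ∅
    · subst hF0; simp
    have hFE := hF.subset_ground
    by_cases hrc : (M.restrict F).Connected
    · exact hx1 F hF ⟨hF0, lt_of_le_of_ne hFE hFne, hrc, hcF⟩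
    · have hnon : (M.restrict F).E.Nonempty := by
        rw [restrict_E hFE]
        exact Finset.nonempty_of_ne_empty hF0
      have hns : ¬ ∀ A, (M.restrict F).Separator A → A = ∅ ∨ A = (M.restrict F).E :=
        fun h => hrc ⟨hnon, h⟩
      push_neg at hns
      obtain ⟨A, hsepA, hA0, hAF⟩ := hns
      obtain ⟨hAsub, hAeq⟩ := hsepA
      rw [restrict_E hFE] at hAsub hAF
      have hAeq' : M.r A + M.r (F \ A) = M.r F := by
        have : (M.restrict F).E = F := restrict_E hFE
        rw [this] at hAeq
        exact hAeq
      have hAE : A ⊆ M.E := hAsub.trans hFE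
      -- the complementary separator
      have hFA : F \ (F \ A) = A := by
        rw [Finset.sdiff_sdiff_self_left, Finset.inter_eq_right.mpr hAsub]
      have hBeq' : M.r (F \ A) + M.r (F \ (F \ A)) = M.r F := by
        rw [hFA]; omega
      have hflat1 : M.Flat A := flat_of_restrict_separator hloop hF hAsub hAeq'
      have hflat2 : M.Flat (F \ A) :=
        flat_of_restrict_separator hloop hF Finset.sdiff_subset hBeq'
      have hcc1 : (M.contract A).Connected :=
        contract_sep_connected hconn hF hcF hAsub hAeq'
      have hcc2 : (M.contract (F \ A)).Connected :=
        contract_sep_connected hconn hF hcF Finset.sdiff_subset hBeq'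
      have hFssE : F ≠ M.E → A ≠ M.E ∧ F \ A ≠ M.E := by
        intro h
        constructor
        · intro hAE'
          exact hFne (Finset.Subset.antisymm hFE (hAE' ▸ hAsub))
        · intro hAE'
          exact hFne (Finset.Subset.antisymm hFE (hAE' ▸ Finset.sdiff_subset))
      obtain ⟨hne1, hne2⟩ := hFssE hFne
      have hAcard : A.card < F.card := Finset.card_lt_card (lt_of_le_of_ne hAsub hAF)
      have hBcard : (F \ A).card < F.card := by
        have h1 : (F \ A).card = F.card - A.card := Finset.card_sdiff_of_subset hAsub
        have h2 : 0 < A.card := Finset.card_pos.mpr hA0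
        have h3 : A.card ≤ F.card := Finset.card_le_card hAsub
        omega
      have ih1 := ih A (by omega) hflat1 hne1 hcc1
      have ih2 := ih (F \ A) (by omega) hflat2 hne2 hcc2
      have hsum : ∑ i ∈ F \ A, x i + ∑ i ∈ A, x i = ∑ i ∈ F, x i :=
        Finset.sum_sdiff hAsub
      have hcast : (M.r A : ℝ) + (M.r (F \ A) : ℝ) = (M.r F : ℝ) := by
        exact_mod_cast congrArg (Nat.cast : ℕ → ℝ) hAeq'
      linarith

/-- Step C2: the flat inequality holds for all flats. -/
lemma sum_le_of_flat (hconn : M.Connected) (hloop : M.Loopless)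
    (hsum : ∑ i ∈ M.E, x i = (M.r M.E : ℝ))
    (hx1 : ∀ F : Finset α, M.Flat F → M.Nondegenerate F → ∑ i ∈ F, x i ≤ (M.r F : ℝ)) :
    ∀ n (F : Finset α), (M.E \ F).card ≤ n → M.Flat F → ∑ i ∈ F, x i ≤ (M.r F : ℝ) := by
  intro n
  induction n with
  | zero =>
    intro F hcard hF
    have h0 : M.E \ F = ∅ := Finset.card_eq_zero.mp (Nat.le_zero.mp hcard)
    have hEF : F = M.E :=
      Finset.Subset.antisymm hF.subset_ground (Finset.sdiff_eq_empty_iff_subset.mp h0)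
    rw [hEF]
    exact le_of_eq hsum
  | succ n ih =>
    intro F hcard hF
    have hFE := hF.subset_ground
    by_cases hFne : F = M.E
    · rw [hFne]; exact le_of_eq hsum
    have hne : (M.E \ F).Nonempty :=
      Finset.sdiff_nonempty.mpr (fun h => hFne (Finset.Subset.antisymm hFE h))
    by_cases hcc : (M.contract F).Connected
    · exact sum_le_of_contract_connected hconn hloop hx1 F.card F (le_refl _) hF hFne hcc
    · have hnon : (M.contract F).E.Nonempty := hne
      have hns : ¬ ∀ A, (M.contract F).Separator A → A = ∅ ∨ A = (M.contract F).E :=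
        fun h => hcc ⟨hnon, h⟩
      push_neg at hns
      obtain ⟨X, hsepX, hX0, hXF⟩ := hns
      rw [contract_separator_iff hFE] at hsepX
      obtain ⟨hXsub, heq⟩ := hsepX
      set Y : Finset α := (M.E \ F) \ X with hYdef
      have hXEF : X ≠ M.E \ F := by
        intro h
        exact hXF (by rw [h]; rfl)
      have hYne : Y.Nonempty :=
        Finset.sdiff_nonempty.mpr (fun h => hXEF (Finset.Subset.antisymm hXsub h))
      have hXne : X.Nonempty := hX0
      have hYsub : Y ⊆ M.E \ F := Finset.sdiff_subset
      have hYX : (M.E \ F) \ Y = X := by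
        rw [hYdef, Finset.sdiff_sdiff_self_left, Finset.inter_eq_right.mpr hXsub]
      have heq1 : M.r (F ∪ X) + M.r (F ∪ Y) = M.r M.E + M.r F := by
        rw [Finset.union_comm F X, Finset.union_comm F Y]
        exact heq
      have hflat1 : M.Flat (F ∪ X) := flat_union_separator_contract hF hXsub heq1
      have hflat2 : M.Flat (F ∪ Y) := by
        apply flat_union_separator_contract hF hYsub
        rw [hYX]
        omega
      have hXE : X ⊆ M.E := hXsub.trans Finset.sdiff_subset
      have hYE : Y ⊆ M.E := hYsub.trans Finset.sdiff_subset
      have hEG1 : M.E \ (F ∪ X) = Y := by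
        ext t
        simp only [Finset.mem_sdiff, Finset.mem_union, hYdef]
        constructor
        · rintro ⟨h1, h2⟩
          push_neg at h2
          exact ⟨⟨h1, h2.1⟩, h2.2⟩
        · rintro ⟨⟨h1, h2⟩, h3⟩
          exact ⟨h1, fun h => h.elim h2 h3⟩
      have hEG2 : M.E \ (F ∪ Y) = X := by
        ext t
        constructor
        · intro ht
          obtain ⟨h1, h2⟩ := Finset.mem_sdiff.mp ht
          by_contra hx
          apply h2
          apply Finset.mem_union_right
          rw [hYdef]
          exact Finset.mem_sdiff.mpr
            ⟨Finset.mem_sdiff.mpr ⟨h1, fun hf => h2 (Finset.mem_union_left _ hf)⟩, hx⟩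
        · intro hx
          obtain ⟨h1, h2⟩ := Finset.mem_sdiff.mp (hXsub hx)
          refine Finset.mem_sdiff.mpr ⟨h1, ?_⟩
          intro h
          rcases Finset.mem_union.mp h with h | h
          · exact h2 h
          · rw [hYdef] at h
            exact (Finset.mem_sdiff.mp h).2 hx
      have hcard1 : (M.E \ (F ∪ X)).card ≤ n := by
        rw [hEG1]
        have h1 : Y.card = (M.E \ F).card - X.card := Finset.card_sdiff_of_subset hXsub
        have h2 : 0 < X.card := Finset.card_pos.mpr hXne
        omega
      have hcard2 : (M.E \ (F ∪ Y)).card ≤ n := by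
        rw [hEG2]
        have h1 : X.card = (M.E \ F).card - Y.card := by
          rw [← hYX]
          exact Finset.card_sdiff_of_subset hYsub
        have h2 : 0 < Y.card := Finset.card_pos.mpr hYne
        have h3 : Y.card ≤ (M.E \ F).card := Finset.card_le_card hYsub
        omega
      have ih1 := ih (F ∪ X) hcard1 hflat1
      have ih2 := ih (F ∪ Y) hcard2 hflat2
      -- sum identity
      have hU : (F ∪ X) ∪ (F ∪ Y) = M.E := by
        apply Finset.Subset.antisymm
        · exact Finset.union_subset (Finset.union_subset hFE hXE)
            (Finset.union_subset hFE hYE)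
        · intro t ht
          simp only [Finset.mem_union, hYdef, Finset.mem_sdiff]
          by_cases hf : t ∈ F
          · tauto
          · by_cases hx : t ∈ X
            · tauto
            · exact Or.inr (Or.inr ⟨⟨ht, hf⟩, hx⟩)
      have hI : (F ∪ X) ∩ (F ∪ Y) = F := by
        ext t
        simp only [Finset.mem_inter, Finset.mem_union, hYdef, Finset.mem_sdiff]
        constructor
        · rintro ⟨h1 | h1, h2 | h2⟩
          · exact h1
          · exact h1
          · exact h2
          · exact absurd h1 h2.2
        · intro h; tauto
      have hsid : ∑ i ∈ (F ∪ X), x i + ∑ i ∈ (F ∪ Y), x i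
          = ∑ i ∈ M.E, x i + ∑ i ∈ F, x i := by
        have hsui := Finset.sum_union_inter (s₁ := F ∪ X) (s₂ := F ∪ Y) (f := x)
        rw [hU, hI] at hsui
        exact hsui.symm
      have hcast : (M.r (F ∪ X) : ℝ) + (M.r (F ∪ Y) : ℝ) = (M.r M.E : ℝ) + (M.r F : ℝ) := by
        exact_mod_cast congrArg (Nat.cast : ℕ → ℝ) heq1
      linarith

/-- All rank inequalities follow from the nondegenerate flat inequalities. -/
lemma sum_le_rank_all (hE : M.E = Finset.univ) (hconn : M.Connected) (hloop : M.Loopless)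
    (hx0 : ∀ i, 0 ≤ x i)
    (hsum : ∑ i ∈ M.E, x i = (M.r M.E : ℝ))
    (hx1 : ∀ F : Finset α, M.Flat F → M.Nondegenerate F → ∑ i ∈ F, x i ≤ (M.r F : ℝ))
    (A : Finset α) : ∑ i ∈ A, x i ≤ (M.r A : ℝ) := by
  have hAE : A ⊆ M.E := by rw [hE]; exact Finset.subset_univ A
  have h1 : ∑ i ∈ A, x i ≤ ∑ i ∈ M.cl A, x i :=
    Finset.sum_le_sum_of_subset_of_nonneg (subset_cl hAE) (fun i _ _ => hx0 i)
  have h2 : ∑ i ∈ M.cl A, x i ≤ (M.r (M.cl A) : ℝ) :=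
    sum_le_of_flat hconn hloop hsum hx1 (M.E \ M.cl A).card (M.cl A) (le_refl _) (cl_flat hAE)
  rw [r_cl hAE] at h2
  linarith

end SumBounds

end FinMatroid

section HullDirection

variable {α : Type*} [DecidableEq α] [Fintype α]

open FinMatroid

/-- Integral points satisfying the constraints are base indicator vectors. -/
lemma integral_case (M : FinMatroid α) (hE : M.E = Finset.univ)
    (x : α → ℝ) (hxsum : ∑ l, x l = (M.r M.E : ℝ))
    (hxr : ∀ A : Finset α, ∑ l ∈ A, x l ≤ (M.r A : ℝ))
    (hint : ∀ l, x l = 0 ∨ x l = 1) : x ∈ basePolytope M := by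
  classical
  set B := Finset.univ.filter (fun l => x l = 1) with hB
  have hmemB : ∀ l, l ∈ B ↔ x l = 1 := by
    intro l; simp [hB]
  have hxind : x = indicatorVec B := by
    funext l
    by_cases h : x l = 1
    · simp [indicatorVec, (hmemB l).mpr h, h]
    · rcases hint l with h0 | h1
      · have : l ∉ B := fun hl => h ((hmemB l).mp hl)
        simp [indicatorVec, this, h0]
      · exact absurd h1 h
  have hsB : ∀ A : Finset α, ∑ l ∈ A, x l = ((A ∩ B).card : ℝ) := by
    intro A
    have hfil : A.filter (fun l => x l = 1) = A ∩ B := by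
      ext l
      simp [Finset.mem_filter, Finset.mem_inter, hmemB l]
    rw [← Finset.sum_filter_add_sum_filter_not A (fun l => x l = 1) x]
    have h1 : ∑ l ∈ A.filter (fun l => x l = 1), x l
        = ((A ∩ B).card : ℝ) := by
      rw [Finset.sum_congr rfl (fun l hl => ((Finset.mem_filter.mp hl).2 : x l = 1))]
      rw [Finset.sum_const, hfil, nsmul_eq_mul, mul_one]
    have h2 : ∑ l ∈ A.filter (fun l => ¬ x l = 1), x l = 0 := by
      apply Finset.sum_eq_zero
      intro l hl
      obtain ⟨_, hl2⟩ := Finset.mem_filter.mp hl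
      rcases hint l with h0 | h1
      · exact h0
      · exact absurd h1 hl2
    rw [h1, h2, add_zero]
  have hcardB : B.card = M.r M.E := by
    have := hsB Finset.univ
    rw [hxsum, Finset.univ_inter] at this
    exact_mod_cast this.symm
  have hBE : B ⊆ M.E := by rw [hE]; exact Finset.subset_univ B
  have hrB : M.r B = B.card := by
    have h1 := hxr B
    rw [hsB B, Finset.inter_self] at h1
    have h2 : (B.card : ℕ) ≤ M.r B := by exact_mod_cast h1
    exact le_antisymm (M.r_le_card hBE) h2
  have hbase : M.Base B := by
    refine ⟨⟨hBE, hrB⟩, ?_⟩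
    intro A hA hBA
    have h1 : A.card = M.r A := hA.2.symm
    have h2 : M.r A ≤ M.r M.E := M.r_mono hA.1 (le_refl _)
    have h3 : A.card ≤ B.card := by omega
    exact (Finset.eq_of_subset_of_card_le hBA h3).symm
  exact subset_convexHull ℝ _ ⟨B, hbase, hxind⟩

/-- Moving from a fractional point along `e_i - e_j` to an endpoint with more tight
constraints. -/
lemma endpoint_lemma (M : FinMatroid α) (x : α → ℝ) (i j : α) (hij : i ≠ j)
    (hr : ∀ A : Finset α, ∑ l ∈ A, x l ≤ (M.r A : ℝ))
    (hi0 : 0 < x i) (hj0 : 0 < x j)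
    (hkey : ∀ A : Finset α, ∑ l ∈ A, x l = (M.r A : ℝ) → (i ∈ A ↔ j ∈ A)) :
    ∃ ε : ℝ, ∃ y : α → ℝ, 0 < ε ∧
      y = (fun l => x l + ε * ((if l = i then (1:ℝ) else 0) - if l = j then 1 else 0)) ∧
      (∀ l, 0 ≤ x l → 0 ≤ y l) ∧ (∑ l, y l = ∑ l, x l) ∧
      (∀ A : Finset α, ∑ l ∈ A, y l ≤ (M.r A : ℝ)) ∧
      ((Finset.univ.filter (fun A : Finset α => ∑ l ∈ A, y l < (M.r A : ℝ))).card
        + (Finset.univ.filter (fun l => 0 < y l)).card <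
       (Finset.univ.filter (fun A : Finset α => ∑ l ∈ A, x l < (M.r A : ℝ))).card
        + (Finset.univ.filter (fun l => 0 < x l)).card) := by
  classical
  set Spos : Finset (Finset α) := Finset.univ.filter (fun A => i ∈ A ∧ j ∉ A) with hSpos
  set cand : Finset ℝ := insert (x j) (Spos.image (fun A => (M.r A : ℝ) - ∑ l ∈ A, x l))
    with hcand
  have hcne : cand.Nonempty := ⟨x j, Finset.mem_insert_self _ _⟩
  set ε := cand.min' hcne with hεdef
  have hslack : ∀ A ∈ Spos, ∑ l ∈ A, x l < (M.r A : ℝ) := by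
    intro A hA
    rw [hSpos, Finset.mem_filter] at hA
    rcases lt_or_eq_of_le (hr A) with h | h
    · exact h
    · exact absurd ((hkey A h).mp hA.2.1) hA.2.2
  have hεpos : 0 < ε := by
    rw [hεdef]
    rw [Finset.lt_min'_iff]
    intro u hu
    rcases Finset.mem_insert.mp hu with rfl | hu
    · exact hj0
    · obtain ⟨A, hA, rfl⟩ := Finset.mem_image.mp hu
      have := hslack A hA
      linarith
  have hεj : ε ≤ x j := Finset.min'_le _ _ (Finset.mem_insert_self _ _)
  have hεA : ∀ A : Finset α, i ∈ A → j ∉ A → ε ≤ (M.r A : ℝ) - ∑ l ∈ A, x l := by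
    intro A hiA hjA
    exact Finset.min'_le _ _ (Finset.mem_insert_of_mem (Finset.mem_image_of_mem _
      (by rw [hSpos, Finset.mem_filter]; exact ⟨Finset.mem_univ _, hiA, hjA⟩)))
  set y : α → ℝ :=
    fun l => x l + ε * ((if l = i then (1:ℝ) else 0) - if l = j then 1 else 0) with hy
  have hysum : ∀ A : Finset α, ∑ l ∈ A, y l
      = ∑ l ∈ A, x l + ε * ((if i ∈ A then (1:ℝ) else 0) - if j ∈ A then 1 else 0) := by
    intro A
    rw [hy]
    rw [Finset.sum_add_distrib, ← Finset.mul_sum, Finset.sum_sub_distrib,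
      Finset.sum_ite_eq' A i (fun _ => (1:ℝ)), Finset.sum_ite_eq' A j (fun _ => (1:ℝ))]
  have hynn : ∀ l, 0 ≤ x l → 0 ≤ y l := by
    intro l hl
    simp only [hy]
    rcases eq_or_ne l i with rfl | h1
    · rw [if_pos rfl, if_neg hij]
      nlinarith [hεpos, hl]
    · rcases eq_or_ne l j with rfl | h2
      · rw [if_neg h1, if_pos rfl]
        nlinarith [hεj, hl]
      · rw [if_neg h1, if_neg h2]
        nlinarith [hl]
  have hytot : ∑ l, y l = ∑ l, x l := by
    rw [hysum Finset.univ]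
    simp
  have hyr : ∀ A : Finset α, ∑ l ∈ A, y l ≤ (M.r A : ℝ) := by
    intro A
    rw [hysum A]
    by_cases hiA : i ∈ A
    · by_cases hjA : j ∈ A
      · simp only [if_pos hiA, if_pos hjA]
        have := hr A; linarith
      · simp only [if_pos hiA, if_neg hjA]
        have := hεA A hiA hjA; linarith
    · by_cases hjA : j ∈ A
      · simp only [if_neg hiA, if_pos hjA]
        have := hr A; linarith
      · simp only [if_neg hiA, if_neg hjA]
        have := hr A; linarith
  have hytight : ∀ A : Finset α, ∑ l ∈ A, x l = (M.r A : ℝ) → ∑ l ∈ A, y l = (M.r A : ℝ) := by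
    intro A hA
    have hiff := hkey A hA
    rw [hysum A]
    by_cases hiA : i ∈ A
    · rw [if_pos hiA, if_pos (hiff.mp hiA)]
      rw [hA]; ring
    · rw [if_neg hiA, if_neg (fun h => hiA (hiff.mpr h))]
      rw [hA]; ring
  have hsub1 : Finset.univ.filter (fun A : Finset α => ∑ l ∈ A, y l < (M.r A : ℝ))
      ⊆ Finset.univ.filter (fun A : Finset α => ∑ l ∈ A, x l < (M.r A : ℝ)) := by
    intro A hA
    rw [Finset.mem_filter] at hA ⊢
    refine ⟨Finset.mem_univ _, ?_⟩
    rcases lt_or_eq_of_le (hr A) with h | h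
    · exact h
    · exact absurd (hytight A h) (ne_of_lt hA.2)
  have hsub2 : Finset.univ.filter (fun l => 0 < y l)
      ⊆ Finset.univ.filter (fun l => 0 < x l) := by
    intro l hl
    rw [Finset.mem_filter] at hl ⊢
    refine ⟨Finset.mem_univ _, ?_⟩
    by_cases h1 : l = i
    · subst h1; exact hi0
    · by_cases h2 : l = j
      · subst h2; exact hj0
      · have : y l = x l := by rw [hy]; simp [h1, h2]
        rw [this] at hl
        exact hl.2
  refine ⟨ε, y, hεpos, hy, hynn, hytot, hyr, ?_⟩
  have hmin := Finset.min'_mem cand hcne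
  rw [← hεdef] at hmin
  rcases Finset.mem_insert.mp hmin with hc | hc
  · -- ε = x j : the coordinate j becomes zero
    have hjy : ¬ (0 < y j) := by
      rw [hy]
      simp only [if_neg (fun h : j = i => hij h.symm), if_pos rfl]
      rw [← hc]; simp
    have hjx : j ∈ Finset.univ.filter (fun l => 0 < x l) :=
      Finset.mem_filter.mpr ⟨Finset.mem_univ _, hj0⟩
    have hjy' : j ∉ Finset.univ.filter (fun l => 0 < y l) := by
      rw [Finset.mem_filter]; tauto
    have hss : Finset.univ.filter (fun l => 0 < y l)
        ⊂ Finset.univ.filter (fun l => 0 < x l) :=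
      (Finset.ssubset_iff_of_subset hsub2).mpr ⟨j, hjx, hjy'⟩
    have h1 := Finset.card_lt_card hss
    have h2 := Finset.card_le_card hsub1
    omega
  · -- ε is the slack of some A₀ ∈ Spos : A₀ becomes tight
    obtain ⟨A₀, hA₀, hcA₀⟩ := Finset.mem_image.mp hc
    have hA₀' := hA₀
    rw [hSpos, Finset.mem_filter] at hA₀'
    have hA₀slack : ∑ l ∈ A₀, x l < (M.r A₀ : ℝ) := hslack A₀ hA₀
    have hA₀tight : ∑ l ∈ A₀, y l = (M.r A₀ : ℝ) := by
      rw [hysum A₀, if_pos hA₀'.2.1, if_neg hA₀'.2.2, ← hcA₀]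
      ring
    have hA₀x : A₀ ∈ Finset.univ.filter (fun A : Finset α => ∑ l ∈ A, x l < (M.r A : ℝ)) :=
      Finset.mem_filter.mpr ⟨Finset.mem_univ _, hA₀slack⟩
    have hA₀y : A₀ ∉ Finset.univ.filter (fun A : Finset α => ∑ l ∈ A, y l < (M.r A : ℝ)) := by
      rw [Finset.mem_filter]
      rw [hA₀tight]
      simp
    have hss : Finset.univ.filter (fun A : Finset α => ∑ l ∈ A, y l < (M.r A : ℝ))
        ⊂ Finset.univ.filter (fun A : Finset α => ∑ l ∈ A, x l < (M.r A : ℝ)) :=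
      (Finset.ssubset_iff_of_subset hsub1).mpr ⟨A₀, hA₀x, hA₀y⟩
    have h1 := Finset.card_lt_card hss
    have h2 := Finset.card_le_card hsub2
    omega

/-- Any point of the polymatroid-style polytope lies in the base polytope. -/
lemma mem_hull_of_constraints (M : FinMatroid α) (hE : M.E = Finset.univ) :
    ∀ n : ℕ, ∀ x : α → ℝ,
      ((Finset.univ.filter (fun A : Finset α => ∑ l ∈ A, x l < (M.r A : ℝ))).card
        + (Finset.univ.filter (fun l => 0 < x l)).card) ≤ n →
      (∀ l, 0 ≤ x l) → (∑ l, x l = (M.r M.E : ℝ)) →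
      (∀ A : Finset α, ∑ l ∈ A, x l ≤ (M.r A : ℝ)) →
      x ∈ basePolytope M := by
  classical
  intro n
  induction n with
  | zero =>
    intro x hμ hx0 hxsum hxr
    apply integral_case M hE x hxsum hxr
    intro l
    left
    have hc : (Finset.univ.filter (fun l => 0 < x l)).card = 0 := by omega
    have : l ∉ Finset.univ.filter (fun l => 0 < x l) := by
      rw [Finset.card_eq_zero.mp hc]
      exact Finset.notMem_empty l
    rw [Finset.mem_filter] at this
    push_neg at this
    exact le_antisymm (this (Finset.mem_univ l)) (hx0 l)
  | succ n ih =>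
    intro x hμ hx0 hxsum hxr
    by_cases hint : ∀ l, x l = 0 ∨ x l = 1
    · exact integral_case M hE x hxsum hxr hint
    push_neg at hint
    obtain ⟨i₀, hi₀0, hi₀1⟩ := hint
    have hub : ∀ l, x l ≤ 1 := by
      intro l
      have h1 := hxr {l}
      rw [Finset.sum_singleton] at h1
      have h2 : M.r {l} ≤ 1 := by
        have := M.r_le_card (show {l} ⊆ M.E by rw [hE]; exact Finset.subset_univ _)
        simpa using this
      have h3 : (M.r {l} : ℝ) ≤ 1 := by exact_mod_cast h2
      linarith
    -- the minimal tight set containing a fractional element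
    set Fam : Finset (Finset α) := Finset.univ.filter
      (fun A : Finset α => ∑ l ∈ A, x l = (M.r A : ℝ) ∧ ∃ l ∈ A, x l ≠ 0 ∧ x l ≠ 1)
      with hFam
    have hFamne : Fam.Nonempty := by
      refine ⟨Finset.univ, ?_⟩
      rw [hFam, Finset.mem_filter]
      refine ⟨Finset.mem_univ _, ?_, i₀, Finset.mem_univ _, hi₀0, hi₀1⟩
      rw [hxsum, hE]
    obtain ⟨T, hT, hTmin⟩ := Finset.exists_min_image Fam Finset.card hFamne
    rw [hFam, Finset.mem_filter] at hT
    obtain ⟨-, hTt, i, hiT, hi0', hi1'⟩ := hT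
    have hi0 : 0 < x i := lt_of_le_of_ne (hx0 i) (Ne.symm hi0')
    have hi1 : x i < 1 := lt_of_le_of_ne (hub i) hi1'
    -- a second fractional element of T
    have hj : ∃ j ∈ T, j ≠ i ∧ x j ≠ 0 ∧ x j ≠ 1 := by
      by_contra hno
      push_neg at hno
      set T' := T.erase i with hT'
      have hsum' : ∑ l ∈ T', x l + x i = ∑ l ∈ T, x l := Finset.sum_erase_add T x hiT
      set m := (T'.filter (fun l => x l = 1)).card with hm
      have hint' : ∑ l ∈ T', x l = (m : ℝ) := by
        rw [← Finset.sum_filter_add_sum_filter_not T' (fun l => x l = 1) x]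
        have h1 : ∑ l ∈ T'.filter (fun l => x l = 1), x l = (m : ℝ) := by
          rw [Finset.sum_congr rfl (fun l hl => ((Finset.mem_filter.mp hl).2 : x l = 1))]
          rw [Finset.sum_const, nsmul_eq_mul, mul_one, hm]
        have h2 : ∑ l ∈ T'.filter (fun l => ¬ x l = 1), x l = 0 := by
          apply Finset.sum_eq_zero
          intro l hl
          obtain ⟨hl1, hl2⟩ := Finset.mem_filter.mp hl
          have hlT : l ∈ T := Finset.mem_of_mem_erase hl1
          have hlni : l ≠ i := Finset.ne_of_mem_erase hl1
          by_contra hl0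
          exact hl2 (hno l hlT hlni hl0)
        rw [h1, h2, add_zero]
      have hxi : x i = (M.r T : ℝ) - (m : ℝ) := by
        rw [hint'] at hsum'
        rw [hTt] at hsum'
        linarith
      rcases le_or_gt (M.r T) m with hc | hc
      · have : (M.r T : ℝ) ≤ (m : ℝ) := by exact_mod_cast hc
        linarith
      · have : (m : ℝ) + 1 ≤ (M.r T : ℝ) := by exact_mod_cast hc
        linarith
    obtain ⟨j, hjT, hjne, hj0', hj1'⟩ := hj
    have hj0 : 0 < x j := lt_of_le_of_ne (hx0 j) (Ne.symm hj0')
    have hj1 : x j < 1 := lt_of_le_of_ne (hub j) hj1'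
    -- uncrossing: tight sets intersect to tight sets
    have huncross : ∀ A : Finset α, ∑ l ∈ A, x l = (M.r A : ℝ) →
        ∑ l ∈ A ∩ T, x l = (M.r (A ∩ T) : ℝ) := by
      intro A hA
      have hmod := Finset.sum_union_inter (s₁ := A) (s₂ := T) (f := x)
      have hsubmod : (M.r (A ∪ T) : ℝ) + (M.r (A ∩ T) : ℝ) ≤ (M.r A : ℝ) + (M.r T : ℝ) := by
        have := M.r_submod (A := A) (B := T)
          (by rw [hE]; exact Finset.subset_univ _) (by rw [hE]; exact Finset.subset_univ _)
        exact_mod_cast this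
      have h1 := hxr (A ∪ T)
      have h2 := hxr (A ∩ T)
      linarith
    -- every tight set contains i iff it contains j
    have hkey : ∀ A : Finset α, ∑ l ∈ A, x l = (M.r A : ℝ) → (i ∈ A ↔ j ∈ A) := by
      intro A hA
      have hintT : ∑ l ∈ A ∩ T, x l = (M.r (A ∩ T) : ℝ) := huncross A hA
      constructor
      · intro hiA
        by_contra hjA
        have hmem : A ∩ T ∈ Fam := by
          rw [hFam, Finset.mem_filter]
          exact ⟨Finset.mem_univ _, hintT, i, Finset.mem_inter.mpr ⟨hiA, hiT⟩, hi0', hi1'⟩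
        have hcle := hTmin _ hmem
        have heqT : A ∩ T = T :=
          Finset.eq_of_subset_of_card_le Finset.inter_subset_right hcle
        exact hjA (Finset.mem_inter.mp (heqT ▸ hjT)).1
      · intro hjA
        by_contra hiA
        have hmem : A ∩ T ∈ Fam := by
          rw [hFam, Finset.mem_filter]
          exact ⟨Finset.mem_univ _, hintT, j, Finset.mem_inter.mpr ⟨hjA, hjT⟩, hj0', hj1'⟩
        have hcle := hTmin _ hmem
        have heqT : A ∩ T = T :=
          Finset.eq_of_subset_of_card_le Finset.inter_subset_right hcle
        exact hiA (Finset.mem_inter.mp (heqT ▸ hiT)).1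
    -- endpoints in both directions
    have hijne : i ≠ j := fun h => hjne h.symm
    obtain ⟨ε₁, y, hε₁, hydef, hynn, hytot, hyr, hyμ⟩ :=
      endpoint_lemma M x i j hijne hxr hi0 hj0 hkey
    obtain ⟨ε₂, z, hε₂, hzdef, hznn, hztot, hzr, hzμ⟩ :=
      endpoint_lemma M x j i hjne hxr hj0 hi0 (fun A hA => (hkey A hA).symm)
    have hymem : y ∈ basePolytope M := by
      apply ih y (by omega) (fun l => hynn l (hx0 l)) (by rw [hytot]; exact hxsum) hyr
    have hzmem : z ∈ basePolytope M := by
      apply ih z (by omega) (fun l => hznn l (hx0 l)) (by rw [hztot]; exact hxsum) hzr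
    -- x is a convex combination of y and z
    set a : ℝ := ε₂ / (ε₁ + ε₂) with ha
    set b : ℝ := ε₁ / (ε₁ + ε₂) with hb
    have hsumpos : 0 < ε₁ + ε₂ := by linarith
    have ha0 : 0 ≤ a := by positivity
    have hb0 : 0 ≤ b := by positivity
    have hab : a + b = 1 := by
      rw [ha, hb]
      field_simp
      ring
    have hcomb : x = a • y + b • z := by
      funext l
      simp only [Pi.add_apply, Pi.smul_apply, smul_eq_mul]
      rw [hydef, hzdef]
      have hbal : a * ε₁ = b * ε₂ := by
        rw [ha, hb]
        field_simp
      have hexp : a * (x l + ε₁ * ((if l = i then (1:ℝ) else 0) - if l = j then 1 else 0))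
          + b * (x l + ε₂ * ((if l = j then (1:ℝ) else 0) - if l = i then 1 else 0))
          = (a + b) * x l + (a * ε₁ - b * ε₂)
            * ((if l = i then (1:ℝ) else 0) - if l = j then 1 else 0) := by
        ring
      rw [hexp, hab, hbal]
      ring
    rw [hcomb]
    exact (convex_convexHull ℝ _) hymem hzmem ha0 hb0 hab

end HullDirection

/-- For a connected loopless matroid of rank `k ≥ 1` on `S`, the base
polytope is cut out by nonnegativity, the rank equation, and the rank inequalities
indexed by non-degenerate flats. -/
theorem statement10 {α : Type*} [DecidableEq α] [Fintype α] (M : FinMatroid α)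
    (hE : M.E = Finset.univ) (hconn : M.Connected) (hloop : M.Loopless)
    {k : ℕ} (hk : 1 ≤ k) (hrank : M.r M.E = k) :
    basePolytope M =
      {x : α → ℝ | (∀ i ∈ M.E, 0 ≤ x i) ∧ (∑ i ∈ M.E, x i) = (k : ℝ) ∧
        ∀ F : Finset α, M.Flat F → M.Nondegenerate F → ∑ i ∈ F, x i ≤ (M.r F : ℝ)} := by
  classical
  apply Set.Subset.antisymm
  · -- basePolytope ⊆ RHS
    apply convexHull_min
    · rintro v ⟨B, hB, rfl⟩
      have hcard : M.r M.E = B.card := FinMatroid.base_spanning hB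
      obtain ⟨⟨hBE, hBr⟩, -⟩ := hB
      have hind : ∀ (A : Finset α), ∑ i ∈ A, indicatorVec B i = ((A ∩ B).card : ℝ) := by
        intro A
        unfold indicatorVec
        rw [Finset.sum_ite_mem, Finset.sum_const, nsmul_eq_mul, mul_one]
      refine ⟨?_, ?_, ?_⟩
      · intro i _
        unfold indicatorVec
        split_ifs <;> norm_num
      · rw [hind M.E, Finset.inter_eq_right.mpr hBE]
        have : B.card = k := by omega
        exact_mod_cast this
      · intro F hF hnd
        rw [hind F]
        have h2 : M.Indep (F ∩ B) :=
          FinMatroid.indep_subset ⟨hBE, hBr⟩ Finset.inter_subset_right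
        have h4 : M.r (F ∩ B) ≤ M.r F :=
          M.r_mono Finset.inter_subset_left hF.subset_ground
        rw [h2.2] at h4
        exact_mod_cast h4
    · -- convexity of the right-hand side
      intro u hu v hv a b ha hb hab
      obtain ⟨hu1, hu2, hu3⟩ := hu
      obtain ⟨hv1, hv2, hv3⟩ := hv
      refine ⟨?_, ?_, ?_⟩
      · intro i hi
        simp only [Pi.add_apply, Pi.smul_apply, smul_eq_mul]
        have g1 := mul_nonneg ha (hu1 i hi)
        have g2 := mul_nonneg hb (hv1 i hi)
        linarith
      · simp only [Pi.add_apply, Pi.smul_apply, smul_eq_mul]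
        rw [Finset.sum_add_distrib, ← Finset.mul_sum, ← Finset.mul_sum, hu2, hv2,
          ← add_mul, hab, one_mul]
      · intro F hF hnd
        have g1 := hu3 F hF hnd
        have g2 := hv3 F hF hnd
        simp only [Pi.add_apply, Pi.smul_apply, smul_eq_mul]
        rw [Finset.sum_add_distrib, ← Finset.mul_sum, ← Finset.mul_sum]
        have g3 := mul_le_mul_of_nonneg_left g1 ha
        have g4 := mul_le_mul_of_nonneg_left g2 hb
        nlinarith [g3, g4]
  · -- RHS ⊆ basePolytope
    rintro x ⟨h1, h2, h3⟩
    have hx0 : ∀ i, 0 ≤ x i := fun i => h1 i (by rw [hE]; exact Finset.mem_univ i)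
    have hsum' : ∑ i ∈ M.E, x i = (M.r M.E : ℝ) := by
      rw [h2, hrank]
    have hall : ∀ A : Finset α, ∑ i ∈ A, x i ≤ (M.r A : ℝ) :=
      fun A => FinMatroid.sum_le_rank_all hE hconn hloop hx0 hsum' h3 A
    have hxsumuniv : ∑ l, x l = (M.r M.E : ℝ) := by
      rw [hE]
      rw [hE] at hsum'
      exact hsum'
    exact mem_hull_of_constraints M hE _ x (le_refl _) hx0 hxsumuniv hall
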